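/- Let r(n) denote the parity of the number of runs of 1's in the binary representation of n. The sequence (r(n))_{n≥0} is quint-free: there do not exist integers i ≥ 0 and s ≥ 1 such that r(i + ks + j) takes the same value for k = 0, 1, 2, 3, 4 for every 0 ≤ j < s (i.e., no factor of the form XXXXX with X nonempty occurs). -/

import Mathlib

/-- Digits of the negabinary (base -2) representation, least significant first. -/
def negaDigits (n : ℤ) : List ℕ :=
  if n = 0 then [] else (n % 2).toNat :: negaDigits ((n % 2 - n) / 2)
termination_by 2 * n.natAbs + (if n < 0 then 1 else 0)
decreasing_by split_ifs <;> omega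

/-- Parity of the number of 1's in the negabinary representation of n. -/
def g (n : ℕ) : ℕ := (negaDigits n).sum % 2

/-- The digit at position i in the negabinary representation. -/
def negaDigit (n : ℤ) (i : ℕ) : ℕ := (negaDigits n).getD i 0

/-- Number of runs (maximal blocks) of 1's in the binary representation of n. -/
def runsOfOnes (n : ℕ) : ℕ :=
  ((Finset.range (n + 1)).filter (fun i => n.testBit i ∧ ¬ n.testBit (i + 1))).card

/-- Parity of the number of runs of 1's in the binary representation of n. -/
def r (n : ℕ) : ℕ := runsOfOnes n % 2


lemma runs_eq (n N : ℕ) (h : n < N) :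
    runsOfOnes n = ∑ i ∈ Finset.range N, (if (n.testBit i ∧ ¬ n.testBit (i+1)) then 1 else 0) := by
  rw [runsOfOnes, Finset.card_filter]
  refine Finset.sum_subset (Finset.range_subset_range.2 h) ?_
  intro i hi hni
  simp only [Finset.mem_range, not_lt] at hni
  have hin : n < 2 ^ i :=
    lt_of_lt_of_le (Nat.lt_two_pow_self (n := n)) (Nat.pow_le_pow_right (by norm_num) (by omega))
  simp [Nat.testBit_lt_two_pow hin]

lemma runs_two_mul (n : ℕ) : runsOfOnes (2*n) = runsOfOnes n := by
  rw [runs_eq (2*n) (2*n+2) (by omega), runs_eq n (2*n+1) (by omega),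
    Finset.sum_range_succ']
  have hdiv : 2*n/2 = n := by omega
  have h0 : (2*n).testBit 0 = false := by
    rw [Nat.testBit_zero]; simp
  simp only [Nat.testBit_succ, hdiv, h0]
  simp

lemma runs_odd (n : ℕ) : runsOfOnes (2*n+1) = runsOfOnes n + (if n % 2 = 0 then 1 else 0) := by
  rw [runs_eq (2*n+1) (2*n+2) (by omega), runs_eq n (2*n+1) (by omega),
    Finset.sum_range_succ']
  have hdiv : (2*n+1)/2 = n := by omega
  have h0 : (2*n+1).testBit 0 = true := by
    rw [Nat.testBit_zero]; simp
  simp only [Nat.testBit_succ, hdiv, h0]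
  rw [Nat.testBit_zero]
  by_cases hn : n % 2 = 0
  · simp [hn]
  · simp [hn]

lemma r_two_mul (n : ℕ) : r (2*n) = r n := by
  unfold r; rw [runs_two_mul]

lemma k1 (u : ℕ) : r (2*(2*u)+1) ≠ r (2*(2*u)) := by
  unfold r
  rw [runs_odd, runs_two_mul (2*u)]
  have : (2*u) % 2 = 0 := by omega
  simp [this]
  omega

lemma k2 (u : ℕ) : r (2*(2*u+1)+1) = r (2*(2*u+1)) := by
  unfold r
  rw [runs_odd, runs_two_mul (2*u+1)]
  have : ¬ ((2*u+1) % 2 = 0) := by omega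
  simp [this]

lemma key (a b : ℕ) (ha : a % 2 = 0) (hb : b % 2 = 1)
    (h1 : r (2*a) = r (2*b)) (h2 : r (2*a+1) = r (2*b+1)) : False := by
  obtain ⟨u, rfl⟩ : ∃ u, a = 2*u := ⟨a/2, by omega⟩
  obtain ⟨v, rfl⟩ : ∃ v, b = 2*v+1 := ⟨b/2, by omega⟩
  exact k1 u (h2.trans ((k2 v).trans h1.symm))

lemma main : ∀ s, 1 ≤ s → ∀ i, ¬ (∀ n, i ≤ n → n < i + 4*s → r (n+s) = r n) := by
  intro s
  induction s using Nat.strong_induction_on with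
  | _ s IH =>
    intro hs i h
    rcases Nat.even_or_odd s with he | ho
    · obtain ⟨t, ht⟩ := he
      refine IH t (by omega) (by omega) ((i+1)/2) ?_
      intro m hm1 hm2
      have h1 := h (2*m) (by omega) (by omega)
      have e : 2*m + s = 2*(m+t) := by omega
      rw [e, r_two_mul, r_two_mul] at h1
      exact h1
    · obtain ⟨c, hc⟩ := ho
      set m := (i+1)/2 with hmdef
      have a1 := h (2*m) (by omega) (by omega)
      have a2 := h (2*m + s) (by omega) (by omega)
      have b1 := h (2*m+1) (by omega) (by omega)
      have b2 := h (2*m+1+s) (by omega) (by omega)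
      have e1 : r (2*(m+s)) = r (2*m) := by
        have e : 2*(m+s) = 2*m+s+s := by ring
        rw [e]; exact a2.trans a1
      have e2 : r (2*(m+s)+1) = r (2*m+1) := by
        have e : 2*(m+s)+1 = 2*m+1+s+s := by ring
        rw [e]; exact b2.trans b1
      rcases Nat.even_or_odd m with ⟨w, hw⟩ | ⟨w, hw⟩
      · exact key m (m+s) (by omega) (by omega) e1.symm e2.symm
      · exact key (m+s) m (by omega) (by omega) e1 e2


theorem stmt12 :
    ¬ ∃ (i s : ℕ), 1 ≤ s ∧ ∀ j < s, ∀ k ≤ 4, r (i + k * s + j) = r (i + j) := by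
  rintro ⟨i, s, hs, H⟩
  apply main s hs i
  intro n hn1 hn2
  obtain ⟨d, rfl⟩ : ∃ d, n = i + d := ⟨n - i, by omega⟩
  have hd := Nat.div_add_mod d s
  set k := d / s with hkdef
  set j := d % s with hjdef
  have hjs : j < s := Nat.mod_lt _ hs
  have hk3 : k ≤ 3 := by
    by_contra hc
    push_neg at hc
    have h4 : 4 * s ≤ s * k := by
      calc 4 * s = s * 4 := by ring
        _ ≤ s * k := Nat.mul_le_mul_left s hc
    omega
  have h1 := H j hjs k (by omega)
  have h2 := H j hjs (k+1) (by omega)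
  have e1 : i + d = i + k * s + j := by
    have : k * s = s * k := by ring
    omega
  have e2 : i + d + s = i + (k+1) * s + j := by
    have : (k+1) * s = s * k + s := by ring
    omega
  have := h2.trans h1.symm
  rw [← e2, ← e1] at this
  exact this
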